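/- arXiv:1906.03086 — 2 statements merged into one kernel-verified Lean document; each statement's English description precedes it below -/
import Mathlib

section
/- Let p be a prime, let f_1, …, f_r ∈ ℤ_p[x_1, …, x_n] be nonzero polynomials, and set g = f_1 y_1 + … + f_r y_r ∈ ℤ_p[x_1, …, x_n, y_1, …, y_r]. Then for every integer m ≥ 0, the Haar probability measure of {(x, v) ∈ ℤ_p^n × ℤ_p^r : v_p(g(x, v)) = m} equals the sum over d = 0, 1, …, m of μ({x ∈ ℤ_p^n : min_{1≤i≤r} v_p(f_i(x)) = d}) · (p − 1) · p^{−(m − d + 1)}. -/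
open MeasureTheory MvPolynomial
open scoped ENNReal

/-- The Borel σ-algebra on the `p`-adic integers. -/
noncomputable instance (p : ℕ) [Fact p.Prime] : MeasurableSpace ℤ_[p] := borel _

instance (p : ℕ) [Fact p.Prime] : BorelSpace ℤ_[p] := ⟨rfl⟩

/-- The Haar probability measure on `ℤ_[p]` (normalized so that `ℤ_[p]` has measure 1). -/
noncomputable def padicHaar (p : ℕ) [Fact p.Prime] : Measure ℤ_[p] :=
  Measure.addHaarMeasure ⊤

instance (p : ℕ) [Fact p.Prime] : SigmaFinite (padicHaar p) :=
  Measure.sigmaFinite_addHaarMeasure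

/-- The Haar probability measure on `ℤ_[p]^n`, as the product of the Haar probability
measures on the factors. -/
noncomputable def padicPiHaar (p : ℕ) [Fact p.Prime] (n : ℕ) :
    Measure (Fin n → ℤ_[p]) :=
  Measure.pi fun _ => padicHaar p

lemma enn_zpow_neg_nat (a : ℝ≥0∞) (ha : a ≠ 0) (ha' : a ≠ ⊤) (k : ℕ) :
    a ^ (-(k : ℤ)) = (a ^ k)⁻¹ := by
  refine ENNReal.eq_inv_of_mul_eq_one_left ?_
  rw [← zpow_natCast a k, ← ENNReal.zpow_add ha ha']
  simp

section Aux
variable (p : ℕ) [Fact p.Prime]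

instance : (padicHaar p).IsAddHaarMeasure := Measure.isAddHaarMeasure_addHaarMeasure ⊤

instance : IsProbabilityMeasure (padicHaar p) := by
  constructor
  have := Measure.addHaarMeasure_self (K₀ := (⊤ : TopologicalSpace.PositiveCompacts ℤ_[p]))
  simpa [padicHaar] using this

instance (n : ℕ) : IsProbabilityMeasure (padicPiHaar p n) := by
  unfold padicPiHaar; infer_instance

lemma continuous_eval_poly {n : ℕ} (g : MvPolynomial (Fin n) ℤ_[p]) :
    Continuous fun x : Fin n → ℤ_[p] => eval x g := by
  induction g using MvPolynomial.induction_on with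
  | C a => simpa using continuous_const
  | add q1 q2 h1 h2 => simp only [map_add]; exact h1.add h2
  | mul_X q i hq => simp only [map_mul, eval_X]; exact hq.mul (continuous_apply i)

lemma ball_measurable (c : ℝ) : MeasurableSet {t : ℤ_[p] | ‖t‖ ≤ c} :=
  (isClosed_le (continuous_norm) continuous_const).measurableSet

lemma padicHaar_ball (k : ℕ) :
    padicHaar p {t : ℤ_[p] | ‖t‖ ≤ (p : ℝ) ^ (-(k : ℤ))} = (p : ℝ≥0∞) ^ (-(k : ℤ)) := by
  have hp := (Fact.out : p.Prime)
  set S := {t : ℤ_[p] | ‖t‖ ≤ (p : ℝ) ^ (-(k : ℤ))} with hS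
  have hmem : ∀ (t : ℤ_[p]), t ∈ S ↔ ((p : ℤ_[p]) ^ k) ∣ t := by
    intro t
    rw [hS, Set.mem_setOf_eq, PadicInt.norm_le_pow_iff_mem_span_pow, Ideal.mem_span_singleton]
  have hT : ∀ j : ℕ, padicHaar p ((fun t => -(j : ℤ_[p]) + t) ⁻¹' S) = padicHaar p S :=
    fun j => measure_preimage_add _ _ _
  have hcover : Set.univ = ⋃ j ∈ Finset.range (p ^ k), ((fun t => -(j : ℤ_[p]) + t) ⁻¹' S) := by
    ext t
    simp only [Set.mem_univ, Set.mem_iUnion, Set.mem_preimage, Finset.mem_range, true_iff]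
    refine ⟨t.appr k, t.appr_lt k, ?_⟩
    rw [hmem]
    have := t.appr_spec k
    rw [Ideal.mem_span_singleton] at this
    convert this using 1
    ring
  have hdisj : (↑(Finset.range (p ^ k)) : Set ℕ).PairwiseDisjoint
      (fun j => ((fun t => -(j : ℤ_[p]) + t) ⁻¹' S)) := by
    intro i hi j hj hij
    simp only [Finset.coe_range, Set.mem_Iio] at hi hj
    refine Set.disjoint_left.2 fun t hti htj => hij ?_
    rw [Set.mem_preimage, hmem] at hti htj
    have hd : ((p : ℤ_[p]) ^ k) ∣ ((i : ℤ_[p]) - (j : ℤ_[p])) := by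
      have : (i : ℤ_[p]) - (j : ℤ_[p]) = (-(j:ℤ_[p]) + t) - (-(i:ℤ_[p]) + t) := by ring
      rw [this]; exact dvd_sub htj hti
    have hle : ‖((i - j : ℤ) : ℤ_[p])‖ ≤ (p : ℝ) ^ (-(k:ℤ)) := by
      have : (((i - j : ℤ) : ℤ_[p])) ∈ S := (hmem _).mpr (by push_cast; exact hd)
      exact this
    rw [PadicInt.norm_int_le_pow_iff_dvd] at hle
    have hzero : (i : ℤ) - j = 0 := by
      by_contra h0
      have h1 : ((p : ℤ) ^ k) ∣ |(i : ℤ) - j| := (dvd_abs _ _).mpr hle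
      have h2 := Int.le_of_dvd (abs_pos.mpr (sub_ne_zero.mpr fun h => h0 (by rw [h, sub_self]))) h1
      have hi' : (i : ℤ) < (p : ℤ) ^ k := by exact_mod_cast hi
      have hj' : (j : ℤ) < (p : ℤ) ^ k := by exact_mod_cast hj
      have h3 : |(i : ℤ) - j| < (p : ℤ) ^ k := by
        rw [abs_lt]
        constructor <;> [linarith [Int.ofNat_nonneg i]; linarith [Int.ofNat_nonneg j]]
      linarith
    exact_mod_cast sub_eq_zero.mp hzero
  have hTm : ∀ j : ℕ, MeasurableSet ((fun t => -(j : ℤ_[p]) + t) ⁻¹' S) := fun j =>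
    (ball_measurable p _).preimage (continuous_const.add continuous_id).measurable
  have h1 : (1 : ℝ≥0∞) = (p ^ k : ℕ) * padicHaar p S := by
    calc (1 : ℝ≥0∞) = padicHaar p Set.univ := (measure_univ).symm
    _ = padicHaar p (⋃ j ∈ Finset.range (p ^ k), ((fun t => -(j : ℤ_[p]) + t) ⁻¹' S)) := by
        rw [← hcover]
    _ = ∑ j ∈ Finset.range (p ^ k), padicHaar p ((fun t => -(j : ℤ_[p]) + t) ⁻¹' S) :=
        measure_biUnion_finset hdisj fun j _ => hTm j
    _ = ∑ _j ∈ Finset.range (p ^ k), padicHaar p S := by simp only [hT]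
    _ = (p ^ k : ℕ) * padicHaar p S := by rw [Finset.sum_const, Finset.card_range, nsmul_eq_mul]
  have hpne : ((p : ℝ≥0∞)) ≠ 0 := by exact_mod_cast hp.ne_zero
  rw [enn_zpow_neg_nat _ hpne (by simp) k]
  refine ENNReal.eq_inv_of_mul_eq_one_left ?_
  rw [mul_comm]
  push_cast at h1
  exact h1.symm

lemma sphere_measurable (c : ℝ) : MeasurableSet {t : ℤ_[p] | ‖t‖ = c} :=
  (isClosed_eq (continuous_norm) continuous_const).measurableSet

lemma padicHaar_sphere (k : ℕ) :
    padicHaar p {t : ℤ_[p] | ‖t‖ = (p : ℝ) ^ (-(k : ℤ))} =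
      ((p : ℝ≥0∞) - 1) * (p : ℝ≥0∞) ^ (-((k : ℤ) + 1)) := by
  have hp := (Fact.out : p.Prime)
  have hpne : ((p : ℝ≥0∞)) ≠ 0 := by exact_mod_cast hp.ne_zero
  have hptop : ((p : ℝ≥0∞)) ≠ ⊤ := by simp
  have hset : {t : ℤ_[p] | ‖t‖ = (p : ℝ) ^ (-(k : ℤ))} =
      {t : ℤ_[p] | ‖t‖ ≤ (p : ℝ) ^ (-(k : ℤ))} \ {t : ℤ_[p] | ‖t‖ ≤ (p : ℝ) ^ (-((k+1) : ℕ) : ℤ)} := by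
    ext t
    simp only [Set.mem_setOf_eq, Set.mem_diff, Set.mem_setOf_eq]
    constructor
    · intro h
      refine ⟨le_of_eq h, fun hle => ?_⟩
      have : (p : ℝ) ^ (-(k : ℤ)) ≤ (p : ℝ) ^ (-((k+1:ℕ) : ℤ)) := h ▸ hle
      have hlt : ((-((k+1:ℕ):ℤ))) < (-(k:ℤ)) := by push_cast; omega
      have := zpow_lt_zpow_right₀ (show (1:ℝ) < p by exact_mod_cast hp.one_lt) hlt
      linarith
    · rintro ⟨h1, h2⟩
      rcases lt_or_eq_of_le h1 with h | h
      · exfalso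
        apply h2
        have := (PadicInt.norm_lt_pow_iff_norm_le_pow_sub_one t (-(k:ℤ))).mp h
        convert this using 2
        push_cast
        ring
      · exact h
  rw [hset, measure_diff ?_ ?_ ?_]
  · rw [padicHaar_ball, padicHaar_ball]
    rw [ENNReal.sub_mul (fun _ _ => by exact ENNReal.zpow_lt_top hpne hptop _ |>.ne), one_mul]
    congr 1
    have : (p:ℝ≥0∞) ^ (-(k:ℤ)) = (p:ℝ≥0∞)^(1:ℤ) * (p:ℝ≥0∞) ^ (-((k:ℤ)+1)) := by
      rw [← ENNReal.zpow_add hpne hptop]; congr 1; ring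
    simpa using this
  · intro t ht
    simp only [Set.mem_setOf_eq] at ht ⊢
    refine le_trans ht ?_
    exact zpow_le_zpow_right₀ (show (1:ℝ) ≤ p by exact_mod_cast hp.one_lt.le) (by push_cast; omega)
  · exact (ball_measurable p _).nullMeasurableSet
  · exact (measure_lt_top _ _).ne

lemma padicHaar_affine (a c : ℤ_[p]) (d m : ℕ) (hd : d ≤ m)
    (ha : ‖a‖ = (p : ℝ) ^ (-(d : ℤ))) (hc : ‖c‖ ≤ (p : ℝ) ^ (-(d : ℤ))) :
    padicHaar p {t : ℤ_[p] | ‖a * t + c‖ = (p : ℝ) ^ (-(m : ℤ))} =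
      ((p : ℝ≥0∞) - 1) * (p : ℝ≥0∞) ^ (-(((m - d : ℕ) : ℤ)) - 1) := by
  have hp := (Fact.out : p.Prime)
  have hppos : (0 : ℝ) < p := by exact_mod_cast hp.pos
  -- find b with c = a * b
  obtain ⟨c', hc'⟩ : ((p : ℤ_[p]) ^ d) ∣ c := by
    rw [← Ideal.mem_span_singleton, ← PadicInt.norm_le_pow_iff_mem_span_pow]; exact hc
  obtain ⟨a', ha'⟩ : ((p : ℤ_[p]) ^ d) ∣ a := by
    rw [← Ideal.mem_span_singleton, ← PadicInt.norm_le_pow_iff_mem_span_pow]; exact ha.le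
  have hnormp : ‖((p : ℤ_[p]) ^ d)‖ = (p : ℝ) ^ (-(d : ℤ)) := by
    simp [PadicInt.norm_p_pow]
  have hau : IsUnit a' := by
    rw [PadicInt.isUnit_iff]
    have : ‖a‖ = ‖((p : ℤ_[p]) ^ d)‖ * ‖a'‖ := by rw [ha', norm_mul]
    rw [ha, hnormp] at this
    have hne : ((p:ℝ) ^ (-(d:ℤ))) ≠ 0 := by positivity
    field_simp at this
    linarith [this]
  obtain ⟨u, hu⟩ := hau
  set b : ℤ_[p] := (↑u⁻¹ : ℤ_[p]) * c' with hb
  have hcb : c = a * b := by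
    rw [hb, ha', hc', ← hu]
    have : (↑u : ℤ_[p]) * ↑u⁻¹ = 1 := by
      rw [← Units.val_mul, mul_inv_cancel, Units.val_one]
    calc (p : ℤ_[p]) ^ d * c' = (p : ℤ_[p]) ^ d * ((↑u * ↑u⁻¹) * c') := by rw [this, one_mul]
    _ = (p : ℤ_[p]) ^ d * ↑u * (↑u⁻¹ * c') := by ring
  have hsets : {t : ℤ_[p] | ‖a * t + c‖ = (p : ℝ) ^ (-(m : ℤ))} =
      (fun t => b + t) ⁻¹' {s : ℤ_[p] | ‖s‖ = (p : ℝ) ^ (-((m - d : ℕ) : ℤ))} := by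
    ext t
    simp only [Set.mem_setOf_eq, Set.mem_preimage, Set.mem_setOf_eq]
    have h1 : a * t + c = a * (b + t) := by rw [hcb]; ring
    rw [h1, norm_mul, ha]
    rw [show ((m - d : ℕ) : ℤ) = (m : ℤ) - d by push_cast [Nat.cast_sub hd]; ring]
    constructor
    · intro h
      have h2 : ‖b + t‖ = (p:ℝ) ^ ((d:ℤ)) * (p:ℝ) ^ (-(m:ℤ)) := by
        rw [← h, ← mul_assoc, ← zpow_add₀ (ne_of_gt hppos), add_neg_cancel, zpow_zero, one_mul]
      rw [h2, ← zpow_add₀ (ne_of_gt hppos)]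
      congr 1
      ring
    · intro h
      rw [h, ← zpow_add₀ (ne_of_gt hppos)]
      congr 1
      ring
  rw [hsets, measure_preimage_add, padicHaar_sphere]
  congr 1
  congr 1
  ring

lemma padic_norm_sum_le {ι : Type*} (s : Finset ι) (g : ι → ℤ_[p]) (C : ℝ) (hC : 0 ≤ C)
    (h : ∀ i ∈ s, ‖g i‖ ≤ C) : ‖∑ i ∈ s, g i‖ ≤ C := by
  classical
  induction s using Finset.induction_on with
  | empty => simpa using hC
  | @insert x s' hx ih =>
    rw [Finset.sum_insert hx]
    refine le_trans (PadicInt.nonarchimedean _ _) (max_le ?_ ?_)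
    · exact h x (Finset.mem_insert_self x s')
    · exact ih fun i hi => h i (Finset.mem_insert_of_mem hi)


lemma padicPiHaar_linear (r' : ℕ) (a : Fin (r' + 1) → ℤ_[p]) (d m : ℕ) (hd : d ≤ m)
    (i₀ : Fin (r' + 1)) (ha : ‖a i₀‖ = (p : ℝ) ^ (-(d : ℤ)))
    (hale : ∀ i, ‖a i‖ ≤ (p : ℝ) ^ (-(d : ℤ))) :
    padicPiHaar p (r' + 1) {v : Fin (r' + 1) → ℤ_[p] | ‖∑ i, a i * v i‖ = (p : ℝ) ^ (-(m : ℤ))} =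
      ((p : ℝ≥0∞) - 1) * (p : ℝ≥0∞) ^ (-(((m - d : ℕ)) : ℤ) - 1) := by
  have hmp := measurePreserving_piFinSuccAbove (fun _ : Fin (r' + 1) => padicHaar p) i₀
  set e := MeasurableEquiv.piFinSuccAbove (fun _ : Fin (r' + 1) => ℤ_[p]) i₀ with he
  set T : Set (ℤ_[p] × (Fin r' → ℤ_[p])) :=
    {q | ‖a i₀ * q.1 + ∑ j, a (i₀.succAbove j) * q.2 j‖ = (p : ℝ) ^ (-(m : ℤ))} with hT
  have hcont : Continuous fun q : ℤ_[p] × (Fin r' → ℤ_[p]) =>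
      a i₀ * q.1 + ∑ j, a (i₀.succAbove j) * q.2 j := by
    refine (continuous_const.mul continuous_fst).add ?_
    exact continuous_finset_sum _ fun j _ =>
      continuous_const.mul ((continuous_apply j).comp continuous_snd)
  have hTm : MeasurableSet T := (isClosed_eq hcont.norm continuous_const).measurableSet
  have hS : {v : Fin (r' + 1) → ℤ_[p] | ‖∑ i, a i * v i‖ = (p : ℝ) ^ (-(m : ℤ))} = e ⁻¹' T := by
    ext v
    simp only [hT, Set.mem_setOf_eq, Set.mem_preimage, he,
      MeasurableEquiv.piFinSuccAbove_apply]
    rw [Fin.sum_univ_succAbove (fun i => a i * v i) i₀]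
    rfl
  rw [hS]
  unfold padicPiHaar
  rw [hmp.measure_preimage hTm.nullMeasurableSet]
  have hswap : ((padicHaar p).prod (Measure.pi fun _ : Fin r' => padicHaar p)) T =
      ((Measure.pi fun _ : Fin r' => padicHaar p).prod (padicHaar p)) (Prod.swap ⁻¹' T) := by
    rw [← Measure.prod_swap, Measure.map_apply measurable_swap hTm]
  rw [hswap, Measure.prod_apply (measurable_swap hTm)]
  have hinner : ∀ w : Fin r' → ℤ_[p],
      padicHaar p {t : ℤ_[p] | (w, t) ∈ Prod.swap ⁻¹' T} =
        ((p : ℝ≥0∞) - 1) * (p : ℝ≥0∞) ^ (-(((m - d : ℕ)) : ℤ) - 1) := by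
    intro w
    have : {t : ℤ_[p] | (w, t) ∈ Prod.swap ⁻¹' T} =
        {t : ℤ_[p] | ‖a i₀ * t + ∑ j, a (i₀.succAbove j) * w j‖ = (p : ℝ) ^ (-(m : ℤ))} := rfl
    rw [this]
    refine padicHaar_affine p _ _ d m hd ha ?_
    refine padic_norm_sum_le p _ _ _ (by positivity) fun j _ => ?_
    calc ‖a (i₀.succAbove j) * w j‖ = ‖a (i₀.succAbove j)‖ * ‖w j‖ := norm_mul _ _
    _ ≤ ‖a (i₀.succAbove j)‖ * 1 := by
        exact mul_le_mul_of_nonneg_left (PadicInt.norm_le_one _) (norm_nonneg _)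
    _ ≤ (p : ℝ) ^ (-(d : ℤ)) := by rw [mul_one]; exact hale _
  calc ∫⁻ w, padicHaar p {t : ℤ_[p] | (w, t) ∈ Prod.swap ⁻¹' T}
        ∂(Measure.pi fun _ : Fin r' => padicHaar p)
      = ∫⁻ _, (((p : ℝ≥0∞) - 1) * (p : ℝ≥0∞) ^ (-(((m - d : ℕ)) : ℤ) - 1))
        ∂(Measure.pi fun _ : Fin r' => padicHaar p) := by
        exact lintegral_congr hinner
    _ = ((p : ℝ≥0∞) - 1) * (p : ℝ≥0∞) ^ (-(((m - d : ℕ)) : ℤ) - 1) := by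
        rw [lintegral_const]
        simp

lemma pointwise_slice {n r' : ℕ} (f : Fin (r' + 1) → MvPolynomial (Fin n) ℤ_[p]) (m : ℕ)
    (H : (Finset.univ : Finset (Fin (r' + 1))).Nonempty) (x : Fin n → ℤ_[p]) :
    padicPiHaar p (r' + 1)
        {v : Fin (r' + 1) → ℤ_[p] | ‖∑ i, eval x (f i) * v i‖ = (p : ℝ) ^ (-(m : ℤ))} =
      ∑ d ∈ Finset.range (m + 1),
        Set.indicator
          {y : Fin n → ℤ_[p] |
            (Finset.univ.sup' H fun i => ‖eval y (f i)‖) = (p : ℝ) ^ (-(d : ℤ))}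
          (fun _ => ((p : ℝ≥0∞) - 1) * (p : ℝ≥0∞) ^ (-((m : ℤ) - (d : ℤ) + 1))) x := by
  have hp := (Fact.out : p.Prime)
  have hp1 : (1 : ℝ) < p := by exact_mod_cast hp.one_lt
  set a : Fin (r' + 1) → ℤ_[p] := fun i => eval x (f i) with ha
  obtain ⟨i₁, -, hM⟩ := Finset.exists_mem_eq_sup' H fun i => ‖a i‖
  by_cases h0 : a i₁ = 0
  · have hall : ∀ i, a i = 0 := by
      intro i
      have h1 : ‖a i‖ ≤ ‖a i₁‖ := hM ▸ Finset.le_sup' (fun i => ‖a i‖) (Finset.mem_univ i)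
      rw [h0, norm_zero] at h1
      exact norm_eq_zero.mp (le_antisymm h1 (norm_nonneg _))
    have hempty : {v : Fin (r' + 1) → ℤ_[p] | ‖∑ i, a i * v i‖ = (p : ℝ) ^ (-(m : ℤ))} = ∅ := by
      ext v
      simp only [Set.mem_setOf_eq, Set.mem_empty_iff_false, iff_false]
      intro hc
      rw [Finset.sum_eq_zero (fun i _ => by rw [hall i, zero_mul]), norm_zero] at hc
      have : (0:ℝ) < (p : ℝ) ^ (-(m : ℤ)) := by positivity
      linarith
    rw [hempty, measure_empty]
    symm
    refine Finset.sum_eq_zero fun d _ => Set.indicator_of_notMem ?_ _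
    intro hx
    have hx' : (Finset.univ.sup' H fun i => ‖a i‖) = (p : ℝ) ^ (-(d : ℤ)) := hx
    rw [hM, h0, norm_zero] at hx'
    have : (0:ℝ) < (p : ℝ) ^ (-(d : ℤ)) := by positivity
    linarith
  · set d₀ : ℕ := (a i₁).valuation with hd₀
    have hv : ‖a i₁‖ = (p : ℝ) ^ (-(d₀ : ℤ)) := by
      exact PadicInt.norm_eq_zpow_neg_valuation h0
    have hsup : (Finset.univ.sup' H fun i => ‖a i‖) = (p : ℝ) ^ (-(d₀ : ℤ)) := hM.trans hv
    have hmemA : ∀ d : ℕ, x ∈ {y : Fin n → ℤ_[p] |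
        (Finset.univ.sup' H fun i => ‖eval y (f i)‖) = (p : ℝ) ^ (-(d : ℤ))} ↔ d = d₀ := by
      intro d
      simp only [Set.mem_setOf_eq]
      rw [show (Finset.univ.sup' H fun i => ‖eval x (f i)‖)
        = (Finset.univ.sup' H fun i => ‖a i‖) from rfl, hsup]
      constructor
      · intro h
        have h2 := zpow_right_injective₀ (by positivity : (0:ℝ) < p) hp1.ne' h.symm
        omega
      · rintro rfl; rfl
    have hale : ∀ i, ‖a i‖ ≤ (p : ℝ) ^ (-(d₀ : ℤ)) := fun i =>
      hsup ▸ Finset.le_sup' (fun i => ‖a i‖) (Finset.mem_univ i)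
    by_cases hdm : d₀ ≤ m
    · rw [show {v : Fin (r' + 1) → ℤ_[p] | ‖∑ i, eval x (f i) * v i‖ = (p : ℝ) ^ (-(m : ℤ))} =
          {v : Fin (r' + 1) → ℤ_[p] | ‖∑ i, a i * v i‖ = (p : ℝ) ^ (-(m : ℤ))} from rfl]
      rw [padicPiHaar_linear p r' a d₀ m hdm i₁ hv hale]
      rw [Finset.sum_eq_single_of_mem d₀ (Finset.mem_range.mpr (by omega))
        (fun d _ hd => Set.indicator_of_notMem (fun hx => hd ((hmemA d).mp hx)) _)]
      rw [Set.indicator_of_mem (show x ∈ _ from (hmemA d₀).mpr rfl)]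
      congr 1
      rw [show (-(((m - d₀ : ℕ)) : ℤ) - 1) = (-((m : ℤ) - (d₀ : ℤ) + 1)) by
        push_cast [Nat.cast_sub hdm]; ring]
    · have hempty : {v : Fin (r' + 1) → ℤ_[p] | ‖∑ i, a i * v i‖ = (p : ℝ) ^ (-(m : ℤ))} = ∅ := by
        ext v
        simp only [Set.mem_setOf_eq, Set.mem_empty_iff_false, iff_false]
        intro hc
        have hb : ‖∑ i, a i * v i‖ ≤ (p : ℝ) ^ (-(d₀ : ℤ)) := by
          refine padic_norm_sum_le p _ _ _ (by positivity) fun i _ => ?_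
          calc ‖a i * v i‖ = ‖a i‖ * ‖v i‖ := norm_mul _ _
          _ ≤ ‖a i‖ * 1 := mul_le_mul_of_nonneg_left (PadicInt.norm_le_one _) (norm_nonneg _)
          _ ≤ (p : ℝ) ^ (-(d₀ : ℤ)) := by rw [mul_one]; exact hale i
        rw [hc] at hb
        have : (p : ℝ) ^ (-(d₀ : ℤ)) < (p : ℝ) ^ (-(m : ℤ)) :=
          zpow_lt_zpow_right₀ hp1 (by omega)
        linarith
      rw [hempty, measure_empty]
      symm
      refine Finset.sum_eq_zero fun d hd => Set.indicator_of_notMem ?_ _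
      intro hx
      have := (hmemA d).mp hx
      rw [Finset.mem_range] at hd
      omega

end Aux

/-- with `g = ∑ f_i y_i ∈ ℤ_p[x_1,…,x_n,y_1,…,y_r]`, for every `m ≥ 0`,
`μ{(x,v) : v_p(g(x,v)) = m} = ∑_{d=0}^m μ{x : min_i v_p(f_i(x)) = d} ⬝ (p-1) p^(-(m-d+1))`.
The condition `v_p(w) = m` is expressed as `‖w‖ = p^(-m)`, and `min_i v_p(f_i(x)) = d`
as `max_i ‖f_i(x)‖ = p^(-d)`. -/
theorem measure_level_set_g_eq_sum
    (p : ℕ) [Fact p.Prime] (n r : ℕ) (hr : 1 ≤ r)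
    (f : Fin r → MvPolynomial (Fin n) ℤ_[p]) (hf : ∀ i, f i ≠ 0)
    (m : ℕ) :
    ((padicPiHaar p n).prod (padicPiHaar p r))
        {z : (Fin n → ℤ_[p]) × (Fin r → ℤ_[p]) |
          ‖eval (Sum.elim z.1 z.2)
              (∑ i, rename Sum.inl (f i) * X (Sum.inr i))‖ = (p : ℝ) ^ (-(m : ℤ))} =
      ∑ d ∈ Finset.range (m + 1),
        padicPiHaar p n
            {x : Fin n → ℤ_[p] |
              (Finset.univ.sup'
                  (Finset.univ_nonempty_iff.mpr (Fin.pos_iff_nonempty.mp hr))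
                  fun i => ‖eval x (f i)‖) = (p : ℝ) ^ (-(d : ℤ))} *
          (((p : ℝ≥0∞) - 1) * (p : ℝ≥0∞) ^ (-((m : ℤ) - (d : ℤ) + 1))) := by
  obtain ⟨r', rfl⟩ : ∃ r', r = r' + 1 := ⟨r - 1, by omega⟩
  have H : (Finset.univ : Finset (Fin (r' + 1))).Nonempty :=
    Finset.univ_nonempty_iff.mpr (Fin.pos_iff_nonempty.mp hr)
  have hg : ∀ z : (Fin n → ℤ_[p]) × (Fin (r' + 1) → ℤ_[p]),
      eval (Sum.elim z.1 z.2) (∑ i, rename Sum.inl (f i) * X (Sum.inr i)) =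
        ∑ i, eval z.1 (f i) * z.2 i := by
    intro z
    rw [map_sum]
    refine Finset.sum_congr rfl fun i _ => ?_
    rw [eval_mul, eval_rename, eval_X]
    simp [Sum.elim_comp_inl]
  have hsetG : {z : (Fin n → ℤ_[p]) × (Fin (r' + 1) → ℤ_[p]) |
        ‖eval (Sum.elim z.1 z.2) (∑ i, rename Sum.inl (f i) * X (Sum.inr i))‖ =
          (p : ℝ) ^ (-(m : ℤ))} =
      {z : (Fin n → ℤ_[p]) × (Fin (r' + 1) → ℤ_[p]) |
        ‖∑ i, eval z.1 (f i) * z.2 i‖ = (p : ℝ) ^ (-(m : ℤ))} := by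
    ext z
    rw [Set.mem_setOf_eq, Set.mem_setOf_eq, hg]
  rw [hsetG]
  have hGm : MeasurableSet {z : (Fin n → ℤ_[p]) × (Fin (r' + 1) → ℤ_[p]) |
      ‖∑ i, eval z.1 (f i) * z.2 i‖ = (p : ℝ) ^ (-(m : ℤ))} := by
    have hcont : Continuous fun z : (Fin n → ℤ_[p]) × (Fin (r' + 1) → ℤ_[p]) =>
        ∑ i, eval z.1 (f i) * z.2 i :=
      continuous_finset_sum _ fun i _ =>
        ((continuous_eval_poly p (f i)).comp continuous_fst).mul
          ((continuous_apply i).comp continuous_snd)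
    exact (isClosed_eq hcont.norm continuous_const).measurableSet
  rw [Measure.prod_apply hGm]
  have hA : ∀ d : ℕ, MeasurableSet {y : Fin n → ℤ_[p] |
      (Finset.univ.sup' H fun i => ‖eval y (f i)‖) = (p : ℝ) ^ (-(d : ℤ))} := by
    intro d
    have hcont : Continuous fun y : Fin n → ℤ_[p] =>
        Finset.univ.sup' H fun i => ‖eval y (f i)‖ :=
      Continuous.finset_sup'_apply H fun i _ => (continuous_eval_poly p (f i)).norm
    exact (isClosed_eq hcont continuous_const).measurableSet
  have hslice : ∀ x : Fin n → ℤ_[p],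
      padicPiHaar p (r' + 1) (Prod.mk x ⁻¹' {z : (Fin n → ℤ_[p]) × (Fin (r' + 1) → ℤ_[p]) |
        ‖∑ i, eval z.1 (f i) * z.2 i‖ = (p : ℝ) ^ (-(m : ℤ))}) =
      ∑ d ∈ Finset.range (m + 1),
        Set.indicator
          {y : Fin n → ℤ_[p] |
            (Finset.univ.sup' H fun i => ‖eval y (f i)‖) = (p : ℝ) ^ (-(d : ℤ))}
          (fun _ => ((p : ℝ≥0∞) - 1) * (p : ℝ≥0∞) ^ (-((m : ℤ) - (d : ℤ) + 1))) x :=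
    fun x => pointwise_slice p f m H x
  rw [lintegral_congr hslice]
  rw [lintegral_finset_sum _ (fun d _ => (measurable_const.indicator (hA d)))]
  refine Finset.sum_congr rfl fun d _ => ?_
  rw [lintegral_indicator_const (hA d)]
  rw [mul_comm]
end

section
/- Let p be a prime, let f_1, …, f_r ∈ ℤ_p[x_1, …, x_n] be nonzero polynomials, and set g = f_1 y_1 + … + f_r y_r ∈ ℤ_p[x_1, …, x_n, y_1, …, y_r]. Define formal power series Z_g(T) = Σ_{m≥0} μ({(x, v) ∈ ℤ_p^n × ℤ_p^r : v_p(g(x, v)) = m}) T^m and Z_𝔞(T) = Σ_{m≥0} μ({x ∈ ℤ_p^n : min_{1≤i≤r} v_p(f_i(x)) = m}) T^m in ℝ[[T]]. Then (1 − p^{−1} T) · Z_g(T) = (1 − p^{−1}) · Z_𝔞(T) as formal power series with real coefficients. -/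
open MeasureTheory MvPolynomial
open scoped ENNReal

instance (p : ℕ) [Fact p.Prime] : IsProbabilityMeasure (padicHaar p) := by
  constructor
  have := Measure.addHaarMeasure_self (K₀ := (⊤ : TopologicalSpace.PositiveCompacts ℤ_[p]))
  simpa [padicHaar] using this

instance (p : ℕ) [Fact p.Prime] : (padicHaar p).IsAddLeftInvariant := by
  unfold padicHaar; infer_instance

instance (p : ℕ) [Fact p.Prime] (n : ℕ) : IsProbabilityMeasure (padicPiHaar p n) := by
  unfold padicPiHaar; infer_instance

variable (p : ℕ) [Fact p.Prime]

lemma ball_meas (k : ℕ) : MeasurableSet {x : ℤ_[p] | ‖x‖ ≤ (p:ℝ)^(-(k:ℤ))} :=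
  (isClosed_le continuous_norm continuous_const).measurableSet

lemma ball_measure (k : ℕ) :
    padicHaar p {x : ℤ_[p] | ‖x‖ ≤ (p:ℝ)^(-(k:ℤ))} = ((p:ℝ≥0∞)^k)⁻¹ := by
  have hp := (Fact.out : p.Prime)
  set B := {x : ℤ_[p] | ‖x‖ ≤ (p:ℝ)^(-(k:ℤ))} with hB
  have hmeas : ∀ j : ℕ, MeasurableSet {x : ℤ_[p] | ‖x - (j:ℤ_[p])‖ ≤ (p:ℝ)^(-(k:ℤ))} :=
    fun j => (isClosed_le (continuous_norm.comp (continuous_id.sub continuous_const))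
      continuous_const).measurableSet
  have hcoset : ∀ j : ℕ, padicHaar p {x : ℤ_[p] | ‖x - (j:ℤ_[p])‖ ≤ (p:ℝ)^(-(k:ℤ))} = padicHaar p B := by
    intro j
    have : {x : ℤ_[p] | ‖x - (j:ℤ_[p])‖ ≤ (p:ℝ)^(-(k:ℤ))} = ((-(j:ℤ_[p])) + ·) ⁻¹' B := by
      ext x; simp [hB, neg_add_eq_sub]
    rw [this, measure_preimage_add]
  have hdisj : (Finset.range (p^k) : Set ℕ).PairwiseDisjoint
      (fun j => {x : ℤ_[p] | ‖x - (j:ℤ_[p])‖ ≤ (p:ℝ)^(-(k:ℤ))}) := by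
    intro a ha b hb hab
    simp only [Finset.coe_range, Set.mem_Iio] at ha hb
    refine Set.disjoint_left.mpr fun x hxa hxb => ?_
    simp only [Set.mem_setOf_eq] at hxa hxb
    have h1 : ‖((a:ℤ_[p]) - (b:ℤ_[p]))‖ ≤ (p:ℝ)^(-(k:ℤ)) := by
      have he : (a:ℤ_[p]) - b = (x - b) + (-(x - a)) := by ring
      rw [he]
      refine le_trans (PadicInt.nonarchimedean _ _) ?_
      rw [norm_neg]
      exact max_le hxb hxa
    rw [show ((a:ℤ_[p]) - b) = ((a - b : ℤ) : ℤ_[p]) by push_cast; ring] at h1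
    rw [PadicInt.norm_int_le_pow_iff_dvd] at h1
    have habs : |(a:ℤ) - b| < (p:ℤ)^k := by
      have ha' : (a:ℤ) < (p:ℤ)^k := by exact_mod_cast ha
      have hb' : (b:ℤ) < (p:ℤ)^k := by exact_mod_cast hb
      rw [abs_sub_lt_iff]; omega
    have := Int.eq_zero_of_abs_lt_dvd h1 habs
    exact hab (by omega)
  have hunion : (⋃ j ∈ Finset.range (p^k), {x : ℤ_[p] | ‖x - (j:ℤ_[p])‖ ≤ (p:ℝ)^(-(k:ℤ))}) = Set.univ := by
    ext x
    simp only [Set.mem_iUnion, Finset.mem_range, Set.mem_setOf_eq, Set.mem_univ, iff_true]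
    refine ⟨x.appr k, x.appr_lt k, ?_⟩
    rw [PadicInt.norm_le_pow_iff_mem_span_pow]
    exact x.appr_spec k
  have hsum : (padicHaar p) Set.univ = ∑ j ∈ Finset.range (p^k), padicHaar p
      {x : ℤ_[p] | ‖x - (j:ℤ_[p])‖ ≤ (p:ℝ)^(-(k:ℤ))} := by
    rw [← hunion, measure_biUnion_finset hdisj (fun j _ => hmeas j)]
  simp only [hcoset, Finset.sum_const, Finset.card_range, nsmul_eq_mul, measure_univ] at hsum
  have hpk0 : ((p:ℝ≥0∞)^k) ≠ 0 :=
    pow_ne_zero _ (by exact_mod_cast hp.pos.ne')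
  have hpkt : ((p:ℝ≥0∞)^k) ≠ ⊤ := ENNReal.pow_ne_top (ENNReal.natCast_ne_top p)
  have : ((p:ℝ≥0∞)^k)⁻¹ * (((p:ℕ)^k : ℕ) * padicHaar p B) = ((p:ℝ≥0∞)^k)⁻¹ * 1 := by
    rw [← hsum]
  rw [← mul_assoc] at this
  push_cast at this
  rwa [ENNReal.inv_mul_cancel hpk0 hpkt, one_mul, mul_one] at this

lemma sphere_meas (k : ℕ) : MeasurableSet {x : ℤ_[p] | ‖x‖ = (p:ℝ)^(-(k:ℤ))} :=
  (isClosed_eq continuous_norm continuous_const).measurableSet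

lemma sphere_eq_diff (k : ℕ) : {x : ℤ_[p] | ‖x‖ = (p:ℝ)^(-(k:ℤ))} =
    {x : ℤ_[p] | ‖x‖ ≤ (p:ℝ)^(-(k:ℤ))} \ {x : ℤ_[p] | ‖x‖ ≤ (p:ℝ)^(-((k+1:ℕ):ℤ))} := by
  ext x
  simp only [Set.mem_setOf_eq, Set.mem_diff]
  have hlt : ∀ y : ℤ_[p], ‖y‖ ≤ (p:ℝ)^(-((k+1:ℕ):ℤ)) ↔ ‖y‖ < (p:ℝ)^(-(k:ℤ)) := by
    intro y
    rw [PadicInt.norm_le_pow_iff_norm_lt_pow_add_one]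
    congr! 2
    push_cast; ring
  rw [hlt]
  constructor
  · intro h; exact ⟨le_of_eq h, by rw [h]; exact lt_irrefl _⟩
  · rintro ⟨h1, h2⟩; exact le_antisymm h1 (not_lt.mp h2)

lemma sphere_measure (k : ℕ) :
    padicHaar p {x : ℤ_[p] | ‖x‖ = (p:ℝ)^(-(k:ℤ))} = ((p:ℝ≥0∞)^k)⁻¹ - ((p:ℝ≥0∞)^(k+1))⁻¹ := by
  have hp := (Fact.out : p.Prime)
  rw [sphere_eq_diff, measure_diff ?_ ((ball_meas p (k+1)).nullMeasurableSet) (measure_ne_top _ _),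
    ball_measure, ball_measure]
  intro x hx
  simp only [Set.mem_setOf_eq] at hx ⊢
  refine hx.trans (zpow_le_zpow_right₀ (by exact_mod_cast hp.one_lt.le) ?_)
  push_cast; omega

lemma affine_sphere_measure (u s : ℤ_[p]) (hu : IsUnit u) (k : ℕ) :
    padicHaar p {t : ℤ_[p] | ‖u * t + s‖ = (p:ℝ)^(-(k:ℤ))} =
      padicHaar p {x : ℤ_[p] | ‖x‖ = (p:ℝ)^(-(k:ℤ))} := by
  obtain ⟨v, hv⟩ := hu.exists_right_inv
  have hset : {t : ℤ_[p] | ‖u * t + s‖ = (p:ℝ)^(-(k:ℤ))} =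
      ((v*s) + ·) ⁻¹' {x : ℤ_[p] | ‖x‖ = (p:ℝ)^(-(k:ℤ))} := by
    ext t
    have h1 : u * (v*s + t) = u * t + s := by
      have : u * (v * s) = s := by rw [← mul_assoc, hv, one_mul]
      rw [mul_add, this]; ring
    simp only [Set.mem_setOf_eq, Set.mem_preimage]
    rw [← h1, norm_mul, PadicInt.isUnit_iff.mp ⟨⟨u, v, hv, by rw [mul_comm]; exact hv⟩, rfl⟩, one_mul]
  rw [hset, measure_preimage_add]

lemma linear_unit (r' : ℕ) (c : Fin (r'+1) → ℤ_[p]) (j : Fin (r'+1)) (hj : IsUnit (c j)) (k : ℕ) :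
    padicPiHaar p (r'+1) {v : Fin (r'+1) → ℤ_[p] | ‖∑ i, c i * v i‖ = (p:ℝ)^(-(k:ℤ))} =
      padicHaar p {x : ℤ_[p] | ‖x‖ = (p:ℝ)^(-(k:ℤ))} := by
  set T : Set (ℤ_[p] × (Fin r' → ℤ_[p])) :=
    {q | ‖c j * q.1 + ∑ i, c (j.succAbove i) * q.2 i‖ = (p:ℝ)^(-(k:ℤ))} with hT
  have hTm : MeasurableSet T := by
    refine (isClosed_eq ?_ continuous_const).measurableSet
    fun_prop
  have hpre : {v : Fin (r'+1) → ℤ_[p] | ‖∑ i, c i * v i‖ = (p:ℝ)^(-(k:ℤ))} =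
      (MeasurableEquiv.piFinSuccAbove (fun _ => ℤ_[p]) j) ⁻¹' T := by
    ext v
    simp only [Set.mem_setOf_eq, Set.mem_preimage, hT, MeasurableEquiv.piFinSuccAbove,
      MeasurableEquiv.coe_mk, Fin.insertNthEquiv, Equiv.coe_fn_symm_mk]
    rw [Fin.sum_univ_succAbove (fun i => c i * v i) j]
    simp [Fin.removeNth]
  unfold padicPiHaar
  rw [hpre,
    (measurePreserving_piFinSuccAbove (fun _ : Fin (r'+1) => padicHaar p) j).measure_preimage
      hTm.nullMeasurableSet,
    Measure.prod_apply_symm hTm]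
  have hslice : ∀ w : Fin r' → ℤ_[p],
      padicHaar p ((fun t => (t, w)) ⁻¹' T) = padicHaar p {x : ℤ_[p] | ‖x‖ = (p:ℝ)^(-(k:ℤ))} := by
    intro w
    exact affine_sphere_measure p (c j) (∑ i, c (j.succAbove i) * w i) hj k
  rw [lintegral_congr hslice, lintegral_const, measure_univ, mul_one]

lemma linear_general (r : ℕ) (c : Fin r → ℤ_[p]) (i₀ : Fin r) (a m : ℕ)
    (hle : ∀ i, ‖c i‖ ≤ (p:ℝ)^(-(a:ℤ))) (heq : ‖c i₀‖ = (p:ℝ)^(-(a:ℤ))) :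
    padicPiHaar p r {v : Fin r → ℤ_[p] | ‖∑ i, c i * v i‖ = (p:ℝ)^(-(m:ℤ))} =
      if a ≤ m then padicHaar p {x : ℤ_[p] | ‖x‖ = (p:ℝ)^(-((m-a:ℕ):ℤ))} else 0 := by
  have hp := (Fact.out : p.Prime)
  have hp1 : (1:ℝ) < p := by exact_mod_cast hp.one_lt
  have hd : ∀ i, ∃ d : ℤ_[p], c i = (p:ℤ_[p])^a * d := by
    intro i
    have := (PadicInt.norm_le_pow_iff_mem_span_pow (c i) a).mp (hle i)
    rwa [Ideal.mem_span_singleton] at this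
  choose d hdc using hd
  have hnorm : ∀ v : Fin r → ℤ_[p], ‖∑ i, c i * v i‖ = (p:ℝ)^(-(a:ℤ)) * ‖∑ i, d i * v i‖ := by
    intro v
    have : ∑ i, c i * v i = (p:ℤ_[p])^a * ∑ i, d i * v i := by
      rw [Finset.mul_sum]
      exact Finset.sum_congr rfl fun i _ => by rw [hdc i, mul_assoc]
    rw [this, norm_mul, PadicInt.norm_p_pow]
  have hpa0 : (p:ℝ)^(-(a:ℤ)) ≠ 0 := by positivity
  have hunit : IsUnit (d i₀) := by
    rw [PadicInt.isUnit_iff]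
    have := heq
    rw [hdc i₀, norm_mul, PadicInt.norm_p_pow] at this
    field_simp at this
    linarith [this]
  by_cases ham : a ≤ m
  · rw [if_pos ham]
    have hseteq : {v : Fin r → ℤ_[p] | ‖∑ i, c i * v i‖ = (p:ℝ)^(-(m:ℤ))} =
        {v : Fin r → ℤ_[p] | ‖∑ i, d i * v i‖ = (p:ℝ)^(-((m-a:ℕ):ℤ))} := by
      ext v
      simp only [Set.mem_setOf_eq, hnorm v]
      have hsplit : (p:ℝ)^(-(m:ℤ)) = (p:ℝ)^(-(a:ℤ)) * (p:ℝ)^(-((m-a:ℕ):ℤ)) := by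
        rw [← zpow_add₀ (by positivity : (p:ℝ) ≠ 0)]
        congr 1
        omega
      rw [hsplit]
      exact ⟨fun h => mul_left_cancel₀ hpa0 h, fun h => by rw [h]⟩
    rw [hseteq]
    match r, c, d, i₀, hunit with
    | r'+1, c, d, i₀, hunit => exact linear_unit p r' d i₀ hunit (m-a)
  · rw [if_neg ham]
    convert measure_empty (μ := padicPiHaar p r)
    rw [Set.eq_empty_iff_forall_notMem]
    intro v hv
    simp only [Set.mem_setOf_eq, hnorm v] at hv
    have h1 : ‖∑ i, d i * v i‖ ≤ 1 := PadicInt.norm_le_one _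
    have : (p:ℝ)^(-(m:ℤ)) ≤ (p:ℝ)^(-(a:ℤ)) := by
      rw [← hv]
      calc (p:ℝ)^(-(a:ℤ)) * ‖∑ i, d i * v i‖ ≤ (p:ℝ)^(-(a:ℤ)) * 1 := by
            exact mul_le_mul_of_nonneg_left h1 (by positivity)
        _ = _ := mul_one _
    have := (zpow_le_zpow_iff_right₀ hp1).mp this
    omega

lemma slice_val (r : ℕ) (hne : (Finset.univ : Finset (Fin r)).Nonempty) (c : Fin r → ℤ_[p]) (m : ℕ) :
    padicPiHaar p r {v : Fin r → ℤ_[p] | ‖∑ i, c i * v i‖ = (p:ℝ)^(-(m:ℤ))} =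
      ∑ a ∈ Finset.range (m+1),
        (if (Finset.univ.sup' hne fun i => ‖c i‖) = (p:ℝ)^(-(a:ℤ)) then
          padicHaar p {x : ℤ_[p] | ‖x‖ = (p:ℝ)^(-((m-a:ℕ):ℤ))} else 0) := by
  have hp := (Fact.out : p.Prime)
  have hp1 : (1:ℝ) < p := by exact_mod_cast hp.one_lt
  obtain ⟨i₀, -, hi₀⟩ := Finset.exists_mem_eq_sup' hne (fun i => ‖c i‖)
  have hle : ∀ i, ‖c i‖ ≤ Finset.univ.sup' hne fun i => ‖c i‖ := fun i =>
    Finset.le_sup' (fun i => ‖c i‖) (Finset.mem_univ i)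
  by_cases h0 : c i₀ = 0
  · have hall : ∀ i, c i = 0 := by
      intro i
      have := hle i
      rw [hi₀, h0, norm_zero] at this
      exact norm_le_zero_iff.mp this
    have hsup : (Finset.univ.sup' hne fun i => ‖c i‖) = 0 := by
      rw [hi₀, h0, norm_zero]
    have hempty : {v : Fin r → ℤ_[p] | ‖∑ i, c i * v i‖ = (p:ℝ)^(-(m:ℤ))} = ∅ := by
      rw [Set.eq_empty_iff_forall_notMem]
      intro v hv
      simp only [Set.mem_setOf_eq] at hv
      have : ∑ i, c i * v i = 0 := by
        refine Finset.sum_eq_zero fun i _ => by rw [hall i, zero_mul]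
      rw [this, norm_zero] at hv
      have : (0:ℝ) < (p:ℝ)^(-(m:ℤ)) := by positivity
      linarith [hv ▸ this]
    rw [hempty, measure_empty]
    symm
    refine Finset.sum_eq_zero fun a _ => if_neg ?_
    rw [hsup]
    intro h
    have : (0:ℝ) < (p:ℝ)^(-(a:ℤ)) := by positivity
    linarith [h ▸ this]
  · set a₀ : ℕ := (c i₀).valuation with ha₀
    have hval : ‖c i₀‖ = (p:ℝ)^(-(a₀:ℤ)) := by
      rw [PadicInt.norm_eq_zpow_neg_valuation h0]
    have hsup : (Finset.univ.sup' hne fun i => ‖c i‖) = (p:ℝ)^(-(a₀:ℤ)) := by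
      rw [hi₀, hval]
    have hle' : ∀ i, ‖c i‖ ≤ (p:ℝ)^(-(a₀:ℤ)) := fun i => (hle i).trans_eq hsup
    rw [linear_general p r c i₀ a₀ m hle' hval]
    have hiff : ∀ a : ℕ, ((Finset.univ.sup' hne fun i => ‖c i‖) = (p:ℝ)^(-(a:ℤ))) ↔ a = a₀ := by
      intro a
      rw [hsup]
      constructor
      · intro h
        have := (zpow_right_strictMono₀ hp1).injective h.symm
        omega
      · rintro rfl; rfl
    calc (if a₀ ≤ m then padicHaar p {x : ℤ_[p] | ‖x‖ = (p:ℝ)^(-((m-a₀:ℕ):ℤ))} else 0)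
        = ∑ a ∈ Finset.range (m+1),
            (if a = a₀ then padicHaar p {x : ℤ_[p] | ‖x‖ = (p:ℝ)^(-((m-a:ℕ):ℤ))} else 0) := by
          rw [Finset.sum_ite_eq' (Finset.range (m+1)) a₀
            (fun a => padicHaar p {x : ℤ_[p] | ‖x‖ = (p:ℝ)^(-((m-a:ℕ):ℤ))})]
          simp only [Finset.mem_range]
          congr 1
          · simp only [eq_iff_iff]; omega
      _ = _ := Finset.sum_congr rfl fun a _ => by
          rw [if_congr (Iff.symm (hiff a)) rfl rfl]

open MvPolynomial in
lemma eval_g (n r : ℕ) (f : Fin r → MvPolynomial (Fin n) ℤ_[p])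
    (x : Fin n → ℤ_[p]) (v : Fin r → ℤ_[p]) :
    eval (Sum.elim x v) (∑ i, rename Sum.inl (f i) * MvPolynomial.X (Sum.inr i)) =
      ∑ i, eval x (f i) * v i := by
  rw [map_sum]
  refine Finset.sum_congr rfl fun i _ => ?_
  rw [eval_mul, eval_rename, eval_X, Sum.elim_comp_inl, Sum.elim_inr]

open MvPolynomial in
lemma coeff_formula (n r : ℕ) (hne : (Finset.univ : Finset (Fin r)).Nonempty)
    (f : Fin r → MvPolynomial (Fin n) ℤ_[p]) (m : ℕ) :
    ((padicPiHaar p n).prod (padicPiHaar p r))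
        {z : (Fin n → ℤ_[p]) × (Fin r → ℤ_[p]) |
          ‖eval (Sum.elim z.1 z.2) (∑ i, rename Sum.inl (f i) * MvPolynomial.X (Sum.inr i))‖
            = (p : ℝ) ^ (-(m : ℤ))} =
      ∑ a ∈ Finset.range (m+1),
        padicHaar p {x : ℤ_[p] | ‖x‖ = (p:ℝ)^(-((m-a:ℕ):ℤ))} *
          padicPiHaar p n {x : Fin n → ℤ_[p] |
            (Finset.univ.sup' hne fun i => ‖eval x (f i)‖) = (p:ℝ)^(-(a:ℤ))} := by
  have hF : Continuous fun x : Fin n → ℤ_[p] =>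
      Finset.univ.sup' hne fun i => ‖eval x (f i)‖ := by
    rw [continuous_iff_continuousAt]
    intro x
    exact ContinuousAt.finset_sup'_apply hne fun i _ =>
      ((f i).continuous_eval.norm).continuousAt
  have hEmeas : ∀ a : ℕ, MeasurableSet {x : Fin n → ℤ_[p] |
      (Finset.univ.sup' hne fun i => ‖eval x (f i)‖) = (p:ℝ)^(-(a:ℤ))} := fun a =>
    (isClosed_eq hF continuous_const).measurableSet
  have hset : {z : (Fin n → ℤ_[p]) × (Fin r → ℤ_[p]) |
          ‖eval (Sum.elim z.1 z.2) (∑ i, rename Sum.inl (f i) * MvPolynomial.X (Sum.inr i))‖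
            = (p : ℝ) ^ (-(m : ℤ))} =
      {z : (Fin n → ℤ_[p]) × (Fin r → ℤ_[p]) |
          ‖∑ i, eval z.1 (f i) * z.2 i‖ = (p : ℝ) ^ (-(m : ℤ))} := by
    ext z; simp only [Set.mem_setOf_eq, eval_g]
  rw [hset]
  have hSmeas : MeasurableSet {z : (Fin n → ℤ_[p]) × (Fin r → ℤ_[p]) |
      ‖∑ i, eval z.1 (f i) * z.2 i‖ = (p : ℝ) ^ (-(m : ℤ))} := by
    refine (isClosed_eq ?_ continuous_const).measurableSet
    refine Continuous.norm (continuous_finset_sum _ fun i _ => ?_)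
    exact ((f i).continuous_eval.comp continuous_fst).mul
      ((continuous_apply i).comp continuous_snd)
  rw [Measure.prod_apply hSmeas]
  have hslice : ∀ x : Fin n → ℤ_[p],
      padicPiHaar p r (Prod.mk x ⁻¹' {z : (Fin n → ℤ_[p]) × (Fin r → ℤ_[p]) |
        ‖∑ i, eval z.1 (f i) * z.2 i‖ = (p : ℝ) ^ (-(m : ℤ))}) =
      ∑ a ∈ Finset.range (m+1),
        Set.indicator {x : Fin n → ℤ_[p] |
            (Finset.univ.sup' hne fun i => ‖eval x (f i)‖) = (p:ℝ)^(-(a:ℤ))}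
          (fun _ => padicHaar p {y : ℤ_[p] | ‖y‖ = (p:ℝ)^(-((m-a:ℕ):ℤ))}) x := by
    intro x
    have : Prod.mk x ⁻¹' {z : (Fin n → ℤ_[p]) × (Fin r → ℤ_[p]) |
        ‖∑ i, eval z.1 (f i) * z.2 i‖ = (p : ℝ) ^ (-(m : ℤ))} =
        {v : Fin r → ℤ_[p] | ‖∑ i, (fun i => eval x (f i)) i * v i‖ = (p : ℝ) ^ (-(m : ℤ))} := rfl
    rw [this, slice_val p r hne (fun i => eval x (f i)) m]
    refine Finset.sum_congr rfl fun a _ => ?_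
    rw [Set.indicator_apply]
    rfl
  rw [lintegral_congr hslice]
  rw [lintegral_finset_sum _ (fun a _ => (measurable_const.indicator (hEmeas a)))]
  refine Finset.sum_congr rfl fun a _ => ?_
  rw [lintegral_indicator_const (hEmeas a)]

lemma sphere_toReal (k : ℕ) :
    (padicHaar p {x : ℤ_[p] | ‖x‖ = (p:ℝ)^(-(k:ℤ))}).toReal =
      (1 - (p:ℝ)⁻¹) * ((p:ℝ)⁻¹)^k := by
  have hp := (Fact.out : p.Prime)
  have hp0 : (p:ℝ) ≠ 0 := by exact_mod_cast hp.pos.ne'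
  have h0 : ((p:ℝ≥0∞)^k) ≠ 0 := pow_ne_zero _ (by exact_mod_cast hp.pos.ne')
  have h1 : ((p:ℝ≥0∞)^(k+1)) ≠ 0 := pow_ne_zero _ (by exact_mod_cast hp.pos.ne')
  rw [sphere_measure, ENNReal.toReal_sub_of_le]
  · rw [ENNReal.toReal_inv, ENNReal.toReal_inv, ENNReal.toReal_pow, ENNReal.toReal_pow,
      ENNReal.toReal_natCast]
    rw [inv_pow]
    field_simp
    ring
  · refine ENNReal.inv_le_inv.mpr (pow_le_pow_right₀ ?_ (by omega))
    exact_mod_cast hp.one_lt.le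
  · exact ENNReal.inv_ne_top.mpr h0

open MvPolynomial in
lemma coeff_real (n r : ℕ) (hne : (Finset.univ : Finset (Fin r)).Nonempty)
    (f : Fin r → MvPolynomial (Fin n) ℤ_[p]) (m : ℕ) :
    (((padicPiHaar p n).prod (padicPiHaar p r))
        {z : (Fin n → ℤ_[p]) × (Fin r → ℤ_[p]) |
          ‖eval (Sum.elim z.1 z.2) (∑ i, rename Sum.inl (f i) * MvPolynomial.X (Sum.inr i))‖
            = (p : ℝ) ^ (-(m : ℤ))}).toReal =
      ∑ a ∈ Finset.range (m+1),
        (1 - (p:ℝ)⁻¹) * ((p:ℝ)⁻¹)^(m-a) *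
          (padicPiHaar p n {x : Fin n → ℤ_[p] |
            (Finset.univ.sup' hne fun i => ‖eval x (f i)‖) = (p:ℝ)^(-(a:ℤ))}).toReal := by
  rw [coeff_formula p n r hne f m, ENNReal.toReal_sum]
  · refine Finset.sum_congr rfl fun a _ => ?_
    rw [ENNReal.toReal_mul, sphere_toReal]
  · exact fun a _ => ENNReal.mul_ne_top (measure_ne_top _ _) (measure_ne_top _ _)

lemma key_arith (q : ℝ) (A : ℕ → ℝ) (k : ℕ) :
    (∑ a ∈ Finset.range (k+1+1), (1 - q) * q^(k+1-a) * A a) -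
      q * ∑ a ∈ Finset.range (k+1), (1 - q) * q^(k-a) * A a = (1 - q) * A (k+1) := by
  rw [Finset.sum_range_succ, Finset.mul_sum]
  have : ∀ a ∈ Finset.range (k+1), (1 - q) * q^(k+1-a) * A a =
      q * ((1 - q) * q^(k-a) * A a) := by
    intro a ha
    rw [Finset.mem_range] at ha
    have : k+1-a = (k-a)+1 := by omega
    rw [this, pow_succ]
    ring
  rw [Finset.sum_congr rfl this]
  simp

/-- with `g = ∑ f_i y_i`, `Z_g(T) = ∑_m μ{(x,v) : v_p(g(x,v)) = m} T^m` and
`Z_𝔞(T) = ∑_m μ{x : min_i v_p(f_i(x)) = m} T^m` in `ℝ[[T]]`, one has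
`(1 - p⁻¹ T) Z_g(T) = (1 - p⁻¹) Z_𝔞(T)`. -/
theorem igusa_power_series_g_vs_ideal
    (p : ℕ) [Fact p.Prime] (n r : ℕ) (hr : 1 ≤ r)
    (f : Fin r → MvPolynomial (Fin n) ℤ_[p]) (hf : ∀ i, f i ≠ 0) :
    (1 - PowerSeries.C ((p : ℝ))⁻¹ * PowerSeries.X) *
        PowerSeries.mk (fun m =>
          (((padicPiHaar p n).prod (padicPiHaar p r))
              {z : (Fin n → ℤ_[p]) × (Fin r → ℤ_[p]) |
                ‖eval (Sum.elim z.1 z.2)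
                    (∑ i, rename Sum.inl (f i) * X (Sum.inr i))‖
                  = (p : ℝ) ^ (-(m : ℤ))}).toReal) =
      PowerSeries.C (1 - (p : ℝ)⁻¹) *
        PowerSeries.mk (fun m =>
          (padicPiHaar p n
              {x : Fin n → ℤ_[p] |
                (Finset.univ.sup'
                    (Finset.univ_nonempty_iff.mpr (Fin.pos_iff_nonempty.mp hr))
                    fun i => ‖eval x (f i)‖) = (p : ℝ) ^ (-(m : ℤ))}).toReal) := by
  have hne : (Finset.univ : Finset (Fin r)).Nonempty :=
    Finset.univ_nonempty_iff.mpr (Fin.pos_iff_nonempty.mp hr)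
  ext m
  rw [sub_mul, one_mul, map_sub, mul_assoc, PowerSeries.coeff_C_mul, PowerSeries.coeff_C_mul,
    PowerSeries.coeff_mk]
  cases m with
  | zero =>
    rw [PowerSeries.coeff_zero_X_mul, PowerSeries.coeff_mk, coeff_real p n r hne f 0]
    simp
  | succ k =>
    rw [PowerSeries.coeff_succ_X_mul, PowerSeries.coeff_mk, PowerSeries.coeff_mk,
      coeff_real p n r hne f (k+1), coeff_real p n r hne f k]
    exact key_arith (p:ℝ)⁻¹ _ k
end
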